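/- Let ℓ, γ ∈ ℕ with γ ≥ 1, and let A : (ℝ^ℓ)^γ → (ℝ^ℓ)^γ be the block shift operator defined by (Ax)_i = x_{i+1} for 1 ≤ i ≤ γ−1 and (Ax)_γ = 0. Fix p ∈ ℕ with p ≥ 1, h ∈ ℝ, and coefficients a_{i,j} ∈ ℝ (1 ≤ j < i ≤ p). For any x ∈ (ℝ^ℓ)^γ and any vectors r₁,…,r_{p−1} ∈ (ℝ^ℓ)^γ, define z₁ = x and zᵢ = x + h Σ_{j=1}^{i−1} a_{i,j}(A z_j + r_j) for 2 ≤ i ≤ p. Then there exist real polynomials ρ₁,…,ρ_p with deg ρᵢ ≤ i−1 and, for each i and each 1 ≤ j ≤ i−1, real polynomials σ_{i,j} with deg σ_{i,j} ≤ i−j−1, all depending only on h and the coefficients a_{i,j} (not on x or the r_j), such that zᵢ = ρᵢ(A)x + Σ_{j=1}^{i−1} σ_{i,j}(A) r_j for every i ∈ {1,…,p}. -/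

import Mathlib

/-- The block shift operator `(Ax)_i = x_{i+1}` (0-indexed, `(Ax)_{γ−1} = 0`). -/
noncomputable def blockShift (ℓ γ : ℕ) :
    Module.End ℝ (Fin γ → EuclideanSpace ℝ (Fin ℓ)) where
  toFun x := fun i => if hi : (i : ℕ) + 1 < γ then x ⟨(i : ℕ) + 1, hi⟩ else 0
  map_add' x y := by funext i; by_cases hi : (i : ℕ) + 1 < γ <;> simp [hi]
  map_smul' c x := by funext i; by_cases hi : (i : ℕ) + 1 < γ <;> simp [hi]

/-- Runge–Kutta stage points (0-indexed): `z 0 = x`,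
`z i = x + h • Σ_{j<i} a i j • v j (z j)`. -/
noncomputable def rkStages {S : Type*} [AddCommGroup S] [Module ℝ S]
    (v : ℕ → S → S) (a : ℕ → ℕ → ℝ) (h : ℝ) (x : S) : ℕ → S :=
  fun i => Nat.strongRecOn i fun i ih =>
    x + h • ∑ j ∈ (Finset.range i).attach, a i j.1 • v j.1 (ih j.1 (Finset.mem_range.mp j.2))


noncomputable def rhoPoly (a : ℕ → ℕ → ℝ) (h : ℝ) : ℕ → Polynomial ℝ
  | i => 1 + h • ∑ j ∈ (Finset.range i).attach,
      a i j.1 • (Polynomial.X * rhoPoly a h j.1)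
  decreasing_by exact Finset.mem_range.mp j.2

noncomputable def sigPoly (a : ℕ → ℕ → ℝ) (h : ℝ) : ℕ → ℕ → Polynomial ℝ
  | i, k => Polynomial.C (h * a i k) + h • ∑ j ∈ (Finset.range i).attach,
      (if k < j.1 then a i j.1 else 0) • (Polynomial.X * sigPoly a h j.1 k)
  termination_by i k => i
  decreasing_by exact Finset.mem_range.mp j.2

lemma rhoPoly_eq (a : ℕ → ℕ → ℝ) (h : ℝ) (i : ℕ) :
    rhoPoly a h i = 1 + h • ∑ j ∈ Finset.range i, a i j • (Polynomial.X * rhoPoly a h j) := by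
  rw [rhoPoly, Finset.sum_attach (Finset.range i) (fun j => a i j • (Polynomial.X * rhoPoly a h j))]

lemma sigPoly_eq (a : ℕ → ℕ → ℝ) (h : ℝ) (i k : ℕ) :
    sigPoly a h i k = Polynomial.C (h * a i k) + h • ∑ j ∈ Finset.range i,
      (if k < j then a i j else 0) • (Polynomial.X * sigPoly a h j k) := by
  rw [sigPoly, Finset.sum_attach (Finset.range i) (fun j => (if k < j then a i j else 0) • (Polynomial.X * sigPoly a h j k))]

lemma rhoPoly_deg (a : ℕ → ℕ → ℝ) (h : ℝ) : ∀ i, (rhoPoly a h i).degree ≤ (i : ℕ) := by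
  intro i
  induction i using Nat.strong_induction_on with
  | _ i ih =>
    rw [rhoPoly_eq]
    refine le_trans (Polynomial.degree_add_le _ _) (max_le ?_ ?_)
    · exact le_trans Polynomial.degree_one_le (by exact_mod_cast Nat.zero_le i)
    · refine le_trans (Polynomial.degree_smul_le _ _)
        (le_trans (Polynomial.degree_sum_le _ _) (Finset.sup_le fun j hj => ?_))
      refine le_trans (Polynomial.degree_smul_le _ _)
        (le_trans (Polynomial.degree_mul_le _ _) ?_)
      have hji := Finset.mem_range.mp hj
      calc Polynomial.X.degree + (rhoPoly a h j).degree
          ≤ 1 + (j : ℕ) := add_le_add Polynomial.degree_X_le (ih j hji)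
        _ ≤ (i : ℕ) := by exact_mod_cast (by omega : 1 + j ≤ i)

lemma sigPoly_deg (a : ℕ → ℕ → ℝ) (h : ℝ) :
    ∀ i, ∀ k < i, (sigPoly a h i k).degree ≤ ((i - k - 1 : ℕ) : ℕ) := by
  intro i
  induction i using Nat.strong_induction_on with
  | _ i ih =>
    intro k hk
    rw [sigPoly_eq]
    refine le_trans (Polynomial.degree_add_le _ _) (max_le ?_ ?_)
    · exact le_trans (Polynomial.degree_C_le) (by exact_mod_cast Nat.zero_le _)
    · refine le_trans (Polynomial.degree_smul_le _ _)
        (le_trans (Polynomial.degree_sum_le _ _) (Finset.sup_le fun j hj => ?_))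
      have hji := Finset.mem_range.mp hj
      by_cases hkj : k < j
      · rw [if_pos hkj]
        refine le_trans (Polynomial.degree_smul_le _ _)
          (le_trans (Polynomial.degree_mul_le _ _) ?_)
        calc Polynomial.X.degree + (sigPoly a h j k).degree
            ≤ 1 + ((j - k - 1 : ℕ) : ℕ) := add_le_add Polynomial.degree_X_le (ih j hji k hkj)
          _ = ((1 + (j - k - 1) : ℕ) : ℕ) := by push_cast; ring
          _ ≤ ((i - k - 1 : ℕ) : ℕ) := by exact_mod_cast (by omega : 1 + (j - k - 1) ≤ i - k - 1)
      · rw [if_neg hkj, zero_smul, Polynomial.degree_zero]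
        exact bot_le

lemma tri_swap {M : Type*} [AddCommMonoid M] (i : ℕ) (f : ℕ → ℕ → M) :
    ∑ j ∈ Finset.range i, ∑ k ∈ Finset.range j, f j k
      = ∑ k ∈ Finset.range i, ∑ j ∈ Finset.range i, if k < j then f j k else 0 := by
  rw [← Finset.sum_comm]
  refine Finset.sum_congr rfl fun j hj => ?_
  have hji := Finset.mem_range.mp hj
  calc ∑ k ∈ Finset.range j, f j k
      = ∑ k ∈ Finset.range j, if k < j then f j k else 0 :=
        Finset.sum_congr rfl fun k hk => (if_pos (Finset.mem_range.mp hk)).symm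
    _ = ∑ k ∈ Finset.range i, if k < j then f j k else 0 := by
        refine Finset.sum_subset (Finset.range_subset_range.mpr hji.le) fun k _ hk => ?_
        exact if_neg fun hlt => hk (Finset.mem_range.mpr hlt)

lemma rkStages_eq {S : Type*} [AddCommGroup S] [Module ℝ S]
    (v : ℕ → S → S) (a : ℕ → ℕ → ℝ) (h : ℝ) (x : S) (i : ℕ) :
    rkStages v a h x i = x + h • ∑ j ∈ Finset.range i, a i j • v j (rkStages v a h x j) := by
  conv_lhs => rw [rkStages, Nat.strongRecOn, WellFounded.fix_eq]
  rw [← Finset.sum_attach (Finset.range i) (fun j => a i j • v j (rkStages v a h x j))]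
  rfl

lemma key {S : Type*} [AddCommGroup S] [Module ℝ S]
    (A : Module.End ℝ S) (a : ℕ → ℕ → ℝ) (h : ℝ) (x : S) (r : ℕ → S) :
    ∀ i, rkStages (fun j z => A z + r j) a h x i =
      (Polynomial.aeval A (rhoPoly a h i)) x +
        ∑ j ∈ Finset.range i, (Polynomial.aeval A (sigPoly a h i j)) (r j) := by
  intro i
  induction i using Nat.strong_induction_on with
  | _ i ih =>
    rw [rkStages_eq]
    -- expand the stage values using the inductive hypothesis
    have hstep : ∀ j ∈ Finset.range i,
        a i j • ((fun j z => A z + r j) j (rkStages (fun j z => A z + r j) a h x j))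
          = a i j • (A ((Polynomial.aeval A (rhoPoly a h j)) x))
            + a i j • (∑ k ∈ Finset.range j, A ((Polynomial.aeval A (sigPoly a h j k)) (r k)))
            + a i j • r j := by
      intro j hj
      rw [ih j (Finset.mem_range.mp hj)]
      simp only [map_add, map_sum, smul_add]
    rw [Finset.sum_congr rfl hstep]
    simp only [Finset.sum_add_distrib, smul_add]
    -- RHS expansion
    have hrho : (Polynomial.aeval A (rhoPoly a h i)) x
        = x + h • ∑ j ∈ Finset.range i, a i j • (A ((Polynomial.aeval A (rhoPoly a h j)) x)) := by
      conv_lhs => rw [rhoPoly_eq]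
      simp only [map_add, map_one, map_smul, map_sum, Polynomial.aeval_mul, Polynomial.aeval_X,
        LinearMap.add_apply, Module.End.one_apply, LinearMap.smul_apply, LinearMap.sum_apply,
        Module.End.mul_apply]
    have hsig : ∀ k ∈ Finset.range i, (Polynomial.aeval A (sigPoly a h i k)) (r k)
        = (h * a i k) • r k + h • ∑ j ∈ Finset.range i,
            (if k < j then a i j else 0) • (A ((Polynomial.aeval A (sigPoly a h j k)) (r k))) := by
      intro k _
      conv_lhs => rw [sigPoly_eq]
      simp only [map_add, Polynomial.aeval_C, map_smul, map_sum, Polynomial.aeval_mul,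
        Polynomial.aeval_X, LinearMap.add_apply, LinearMap.smul_apply, LinearMap.sum_apply,
        Module.End.mul_apply, Algebra.algebraMap_self, RingHom.id_apply]
      rfl
    rw [hrho, Finset.sum_congr rfl hsig]
    simp only [Finset.sum_add_distrib]
    have h1 : ∑ k ∈ Finset.range i, (h * a i k) • r k = h • ∑ k ∈ Finset.range i, a i k • r k := by
      rw [Finset.smul_sum]
      exact Finset.sum_congr rfl fun k _ => (smul_smul h (a i k) (r k)).symm
    have h2 : ∑ j ∈ Finset.range i, a i j • ∑ k ∈ Finset.range j,
          A ((Polynomial.aeval A (sigPoly a h j k)) (r k))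
        = ∑ k ∈ Finset.range i, ∑ j ∈ Finset.range i,
          (if k < j then a i j else 0) • (A ((Polynomial.aeval A (sigPoly a h j k)) (r k))) := by
      have := tri_swap i (fun j k => a i j • A ((Polynomial.aeval A (sigPoly a h j k)) (r k)))
      simp only [Finset.smul_sum] at *
      rw [this]
      refine Finset.sum_congr rfl fun k _ => Finset.sum_congr rfl fun j _ => ?_
      by_cases hkj : k < j <;> simp [hkj]
    rw [h2, h1]
    simp only [smul_add, Finset.smul_sum]
    abel

theorem stmt16 (ℓ γ : ℕ) (hγ : 1 ≤ γ) (p : ℕ) (hp : 1 ≤ p) (h : ℝ) (a : ℕ → ℕ → ℝ) :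
    ∃ ρ : ℕ → Polynomial ℝ, ∃ σ : ℕ → ℕ → Polynomial ℝ,
      (∀ i < p, (ρ i).degree ≤ (i : ℕ)) ∧
      (∀ i < p, ∀ j < i, (σ i j).degree ≤ ((i - j - 1 : ℕ) : ℕ)) ∧
      ∀ x : Fin γ → EuclideanSpace ℝ (Fin ℓ),
        ∀ r : ℕ → (Fin γ → EuclideanSpace ℝ (Fin ℓ)),
        ∀ i < p,
          rkStages (fun j z => blockShift ℓ γ z + r j) a h x i =
            (Polynomial.aeval (blockShift ℓ γ) (ρ i)) x +
              ∑ j ∈ Finset.range i, (Polynomial.aeval (blockShift ℓ γ) (σ i j)) (r j) := by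
  exact ⟨rhoPoly a h, sigPoly a h, fun i _ => rhoPoly_deg a h i,
    fun i _ j hj => sigPoly_deg a h i j hj,
    fun x r i _ => key (blockShift ℓ γ) a h x r i⟩
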